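/- Let the column index set of C be partitioned into S and S̄, let φ* satisfy the normal equation (CᵀC + λI)φ* = CᵀY with λ > 0, let ψ* ∈ ℝ^{S̄} be arbitrary, and let φ̂ be the vector equal to 0 on S and ψ* on S̄. Then the loss increase satisfies ΔL = L(φ̂) − L(φ*) ≥ λ‖φ*_S‖², where φ*_S is the restriction of φ* to the coordinates in S; in particular ΔL > 0 whenever φ*_S ≠ 0, so pruning the coordinates in S strictly increases the ridge loss by an amount growing with ‖φ*_S‖. -/
import Mathlib


open Matrix

private lemma dp_expand {α : Type} [Fintype α] (x y : α → ℝ) :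
    (x + y) ⬝ᵥ (x + y) = x ⬝ᵥ x + 2 * (x ⬝ᵥ y) + y ⬝ᵥ y := by
  rw [add_dotProduct, dotProduct_add, dotProduct_add, dotProduct_comm y x]; ring

private lemma sq_sum_eq {α : Type} [Fintype α] (v : α → ℝ) :
    ∑ i, v i ^ 2 = v ⬝ᵥ v := by
  simp [dotProduct, sq]

/-- Let the column index set of `C` be partitioned into `S` and `S̄`, let `φ*`
satisfy the normal equation `(Cᵀ C + λ I) φ* = Cᵀ Y` with `λ > 0`, let `ψ* ∈ ℝ^S̄` be arbitrary,
and let `φ̂` be the vector equal to `0` on `S` and `ψ*` on `S̄`. Then the loss increase satisfies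
`ΔL = L(φ̂) − L(φ*) ≥ λ ‖φ*_S‖²`; in particular `ΔL > 0` whenever `φ*_S ≠ 0`. -/
theorem pruning_loss_increase_lower_bound (m : ℕ) (S Sbar : Type)
    [Fintype S] [Fintype Sbar] [DecidableEq S] [DecidableEq Sbar]
    (C : Matrix (Fin m) (S ⊕ Sbar) ℝ) (Y : Fin m → ℝ) (lam : ℝ) (hlam : 0 < lam)
    (L : (S ⊕ Sbar → ℝ) → ℝ)
    (hL : ∀ φ, L φ = (∑ i, (C *ᵥ φ - Y) i ^ 2) + lam * ∑ j, φ j ^ 2)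
    (φstar : S ⊕ Sbar → ℝ)
    (hnormal : (Cᵀ * C + lam • (1 : Matrix (S ⊕ Sbar) (S ⊕ Sbar) ℝ)) *ᵥ φstar = Cᵀ *ᵥ Y)
    (ψstar : Sbar → ℝ)
    (φhat : S ⊕ Sbar → ℝ) (hφhat : φhat = Sum.elim (fun _ => 0) ψstar) :
    lam * (∑ s : S, φstar (Sum.inl s) ^ 2) ≤ L φhat - L φstar ∧
      ((fun s : S => φstar (Sum.inl s)) ≠ 0 → 0 < L φhat - L φstar) := by
  set d : S ⊕ Sbar → ℝ := fun j => φhat j - φstar j with hd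
  have hφhat_eq : φhat = φstar + d := by funext j; simp [hd]
  -- normal equation rewritten
  have hCT : Cᵀ *ᵥ (C *ᵥ φstar - Y) = (-lam) • φstar := by
    have h1 : Cᵀ *ᵥ (C *ᵥ φstar) + lam • φstar = Cᵀ *ᵥ Y := by
      have h := hnormal
      rwa [add_mulVec, Matrix.smul_mulVec, one_mulVec, ← mulVec_mulVec] at h
    rw [mulVec_sub, h1.symm]
    funext j
    simp
  -- cross term vanishes
  have hcross : (C *ᵥ φstar - Y) ⬝ᵥ (C *ᵥ d) + lam * (φstar ⬝ᵥ d) = 0 := by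
    have h1 : (C *ᵥ φstar - Y) ⬝ᵥ (C *ᵥ d) = ((-lam) • φstar) ⬝ᵥ d := by
      rw [dotProduct_mulVec, ← mulVec_transpose, hCT]
    rw [h1, smul_dotProduct, smul_eq_mul]
    ring
  have hA : C *ᵥ φhat - Y = (C *ᵥ φstar - Y) + C *ᵥ d := by
    rw [hφhat_eq, mulVec_add]
    funext i; simp; ring
  have hΔ : L φhat - L φstar = (C *ᵥ d) ⬝ᵥ (C *ᵥ d) + lam * (d ⬝ᵥ d) := by
    rw [hL, hL, sq_sum_eq, sq_sum_eq, sq_sum_eq, sq_sum_eq, hA, hφhat_eq,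
      dp_expand, dp_expand]
    nlinarith [hcross]
  have hCd_nonneg : (0:ℝ) ≤ (C *ᵥ d) ⬝ᵥ (C *ᵥ d) := by
    apply Finset.sum_nonneg
    intro i _
    exact mul_self_nonneg _
  have hdS : ∀ s : S, d (Sum.inl s) = - φstar (Sum.inl s) := by
    intro s; simp [hd, hφhat]
  have hdd : (∑ s : S, φstar (Sum.inl s) ^ 2) ≤ d ⬝ᵥ d := by
    have h1 : d ⬝ᵥ d = (∑ s : S, d (Sum.inl s) * d (Sum.inl s))
        + ∑ t : Sbar, d (Sum.inr t) * d (Sum.inr t) := by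
      simp [dotProduct, Fintype.sum_sum_type]
    have h2 : (∑ s : S, d (Sum.inl s) * d (Sum.inl s))
        = ∑ s : S, φstar (Sum.inl s) ^ 2 := by
      apply Finset.sum_congr rfl
      intro s _
      rw [hdS s]; ring
    have h3 : (0:ℝ) ≤ ∑ t : Sbar, d (Sum.inr t) * d (Sum.inr t) :=
      Finset.sum_nonneg fun t _ => mul_self_nonneg _
    rw [h1, h2]
    linarith
  have hmain : lam * (∑ s : S, φstar (Sum.inl s) ^ 2) ≤ L φhat - L φstar := by
    rw [hΔ]
    nlinarith [hdd, hCd_nonneg, hlam.le]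
  refine ⟨hmain, fun hne => ?_⟩
  obtain ⟨s, hs⟩ := Function.ne_iff.mp hne
  have hpos : 0 < ∑ s : S, φstar (Sum.inl s) ^ 2 := by
    have hle : φstar (Sum.inl s) ^ 2 ≤ ∑ s : S, φstar (Sum.inl s) ^ 2 :=
      Finset.single_le_sum (f := fun s : S => φstar (Sum.inl s) ^ 2) (fun i _ => sq_nonneg _) (Finset.mem_univ s)
    have hs' : φstar (Sum.inl s) ≠ 0 := hs
    have : 0 < φstar (Sum.inl s) ^ 2 := by positivity
    linarith
  have : 0 < lam * (∑ s : S, φstar (Sum.inl s) ^ 2) := mul_pos hlam hpos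
  linarith
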